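/- Let n ≥ 2 be an even integer. Then there exists D ∈ ℕ such that for every odd integer d ≥ D the following holds: setting I = ⟨x_0^d, …, x_{n−1}^d, y^d⟩ in R, m_1 = x_0^{d−1}⋯x_{n−3}^{d−1}x_{n−2}^{n}y^{d−1} (for n = 2, m_1 = x_0^{2}y^{d−1}), and m_2 = x_0^{d−1}⋯x_{n−1}^{d−1}y^{n/2}, the number of monomials of weighted degree d dividing m_2 is at most the number of monomials u of weighted degree d such that u is none of x_0^d, …, x_{n−1}^d and u·m_1 ∈ I. -/

import Mathlib

open MvPolynomial

/-- The weighted degree of an exponent vector on the variables of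
`R = k[x_0, …, x_{n-1}, y]`, where each `x_j` has degree 1 and `y` has degree 2. -/
def degw (n : ℕ) (σ : (Fin n ⊕ Unit) →₀ ℕ) : ℕ :=
  (∑ j : Fin n, σ (Sum.inl j)) + 2 * σ (Sum.inr ())

/-- Exponent vector built from `x`-exponents `e` and `y`-exponent `b`. -/
noncomputable def toE (n : ℕ) (e : Fin n → ℕ) (b : ℕ) : (Fin n ⊕ Unit) →₀ ℕ :=
  (∑ j : Fin n, Finsupp.single (Sum.inl j) (e j)) + Finsupp.single (Sum.inr ()) b

lemma toE_apply_inl {n : ℕ} (e : Fin n → ℕ) (b : ℕ) (i : Fin n) :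
    toE n e b (Sum.inl i) = e i := by
  classical
  simp only [toE, Finsupp.add_apply, Finsupp.finset_sum_apply, Finsupp.single_apply]
  rw [Finset.sum_congr rfl (fun j _ => by
    simp only [Sum.inl.injEq] : ∀ j ∈ Finset.univ,
      (if Sum.inl j = Sum.inl i then e j else 0) = if j = i then e j else 0)]
  simp

lemma toE_apply_inr {n : ℕ} (e : Fin n → ℕ) (b : ℕ) :
    toE n e b (Sum.inr ()) = b := by
  classical
  simp only [toE, Finsupp.add_apply, Finsupp.finset_sum_apply, Finsupp.single_apply]
  simp

lemma degw_toE {n : ℕ} (e : Fin n → ℕ) (b : ℕ) :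
    degw n (toE n e b) = (∑ j : Fin n, e j) + 2 * b := by
  simp [degw, toE_apply_inl, toE_apply_inr]

lemma prod_eq_monomial (k : Type*) [CommSemiring k] (n : ℕ) (e : Fin n → ℕ) (b : ℕ) :
    (∏ j : Fin n, (X (Sum.inl j) : MvPolynomial (Fin n ⊕ Unit) k) ^ e j) *
      X (Sum.inr ()) ^ b = monomial (toE n e b) 1 := by
  have h1 : (∏ j : Fin n, (X (Sum.inl j) : MvPolynomial (Fin n ⊕ Unit) k) ^ e j)
      = monomial (∑ j : Fin n, Finsupp.single (Sum.inl j) (e j)) 1 := by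
    rw [monomial_sum_index, C_1, one_mul]
    exact Finset.prod_congr rfl fun j _ => X_pow_eq_monomial
  rw [h1, toE, monomial_add_single]

/-- Summing a function that vanishes below `n-2`. -/
lemma sum_two {n : ℕ} (hn : 2 ≤ n) (f : Fin n → ℕ)
    (h : ∀ j : Fin n, (j : ℕ) < n - 2 → f j = 0) :
    ∑ j : Fin n, f j = f ⟨n - 2, by omega⟩ + f ⟨n - 1, by omega⟩ := by
  classical
  set i2 : Fin n := ⟨n - 2, by omega⟩
  set i1 : Fin n := ⟨n - 1, by omega⟩
  have hne : i2 ≠ i1 := by simp [i2, i1, Fin.ext_iff]; omega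
  have key : ∀ j : Fin n, f j =
      (if j = i2 then f i2 else 0) + (if j = i1 then f i1 else 0) := by
    intro j
    rcases lt_trichotomy ((j : ℕ)) (n - 2) with hj | hj | hj
    · have hj2 : j ≠ i2 := by simp [i2, Fin.ext_iff]; omega
      have hj1 : j ≠ i1 := by simp [i1, Fin.ext_iff]; omega
      simp [hj2, hj1, h j hj]
    · have hj2 : j = i2 := by simp [i2, Fin.ext_iff]; omega
      simp [hj2, hne]
    · have hj1 : j = i1 := by
        have := j.isLt
        simp [i1, Fin.ext_iff]; omega
      have hj2 : j ≠ i2 := by subst hj1; exact fun hh => hne hh.symm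
      simp [hj1, hj2, hne.symm]
  rw [Finset.sum_congr rfl (fun j _ => key j), Finset.sum_add_distrib]
  simp

set_option maxHeartbeats 1000000 in
/-- Let `n ≥ 2` be even. Then there is `D` such that for every odd `d ≥ D`,
with `I = ⟨x_0^d, …, x_{n-1}^d, y^d⟩`,
`m₁ = x_0^{d-1} ⋯ x_{n-3}^{d-1} x_{n-2}^{n} y^{d-1}` (so `m₁ = x_0^2 y^{d-1}` when `n = 2`)
and `m₂ = x_0^{d-1} ⋯ x_{n-1}^{d-1} y^{n/2}` in `R = k[x_0, …, x_{n-1}, y]`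
(with `deg x_j = 1`, `deg y = 2`): the number of monomials of weighted degree `d` dividing
`m₂` is at most the number of monomials `u` of weighted degree `d` which are none of
`x_0^d, …, x_{n-1}^d` and satisfy `u * m₁ ∈ I`. -/
theorem stmt_15 (k : Type*) [Field k] (n : ℕ) (hn : 2 ≤ n) (hneven : Even n) :
    ∃ D : ℕ, ∀ d : ℕ, D ≤ d → Odd d →
      Set.ncard {σ : (Fin n ⊕ Unit) →₀ ℕ | degw n σ = d ∧
          monomial σ (1 : k) ∣
            (∏ j : Fin n, X (Sum.inl j) ^ (d - 1)) * X (Sum.inr ()) ^ (n / 2)} ≤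
      Set.ncard {σ : (Fin n ⊕ Unit) →₀ ℕ | degw n σ = d ∧
          (∀ j : Fin n,
            monomial σ (1 : k) ≠ (X (Sum.inl j) : MvPolynomial (Fin n ⊕ Unit) k) ^ d) ∧
          monomial σ (1 : k) *
              ((∏ j : Fin n, X (Sum.inl j) ^
                  (if (j : ℕ) < n - 2 then d - 1 else if (j : ℕ) = n - 2 then n else 0)) *
                X (Sum.inr ()) ^ (d - 1)) ∈
            Ideal.span ({(X (Sum.inr ()) : MvPolynomial (Fin n ⊕ Unit) k) ^ d} ∪
              Set.range fun j : Fin n =>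
                (X (Sum.inl j) : MvPolynomial (Fin n ⊕ Unit) k) ^ d)} := by
  classical
  obtain ⟨m, hm⟩ := hneven
  refine ⟨n + 2, fun d hd hodd => ?_⟩
  obtain ⟨t, ht⟩ := hodd
  have hd3 : n + 3 ≤ d := by omega
  set idx2 : Fin n := ⟨n - 2, by omega⟩ with hidx2
  set idx1 : Fin n := ⟨n - 1, by omega⟩ with hidx1
  -- the exponent vectors of m₂ and m₁
  set M2 : (Fin n ⊕ Unit) →₀ ℕ := toE n (fun _ => d - 1) (n / 2) with hM2
  set M1 : (Fin n ⊕ Unit) →₀ ℕ :=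
    toE n (fun j => if (j : ℕ) < n - 2 then d - 1 else if (j : ℕ) = n - 2 then n else 0)
      (d - 1) with hM1
  set A : Set ((Fin n ⊕ Unit) →₀ ℕ) := {σ | degw n σ = d ∧
      monomial σ (1 : k) ∣
        (∏ j : Fin n, X (Sum.inl j) ^ (d - 1)) * X (Sum.inr ()) ^ (n / 2)} with hA
  set B : Set ((Fin n ⊕ Unit) →₀ ℕ) := {σ | degw n σ = d ∧
      (∀ j : Fin n,
        monomial σ (1 : k) ≠ (X (Sum.inl j) : MvPolynomial (Fin n ⊕ Unit) k) ^ d) ∧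
      monomial σ (1 : k) *
          ((∏ j : Fin n, X (Sum.inl j) ^
              (if (j : ℕ) < n - 2 then d - 1 else if (j : ℕ) = n - 2 then n else 0)) *
            X (Sum.inr ()) ^ (d - 1)) ∈
        Ideal.span ({(X (Sum.inr ()) : MvPolynomial (Fin n ⊕ Unit) k) ^ d} ∪
          Set.range fun j : Fin n =>
            (X (Sum.inl j) : MvPolynomial (Fin n ⊕ Unit) k) ^ d)} with hB
  -- basic facts about A
  have hAbound : ∀ σ ∈ A, (∀ j : Fin n, σ (Sum.inl j) ≤ d - 1) ∧
      σ (Sum.inr ()) ≤ n / 2 := by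
    intro σ hσ
    have hdvd := hσ.2
    rw [prod_eq_monomial, ← hM2] at hdvd
    rw [monomial_dvd_monomial] at hdvd
    have hle : σ ≤ M2 := by
      rcases hdvd.1 with h0 | h
      · exact absurd h0 one_ne_zero
      · exact h
    rw [Finsupp.le_def] at hle
    constructor
    · intro j
      have := hle (Sum.inl j)
      rwa [hM2, toE_apply_inl] at this
    · have := hle (Sum.inr ())
      rwa [hM2, toE_apply_inr] at this
  -- bad predicate
  set P : ((Fin n ⊕ Unit) →₀ ℕ) → Prop := fun σ =>
    σ (Sum.inr ()) = 0 ∧ (∀ j : Fin n, (j : ℕ) < n - 2 → σ (Sum.inl j) = 0) ∧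
      σ (Sum.inl idx2) + n < d with hP
  set τ : ((Fin n ⊕ Unit) →₀ ℕ) → ((Fin n ⊕ Unit) →₀ ℕ) := fun σ =>
    toE n (fun j => if j = idx2 then σ (Sum.inl idx2) - 1
      else if j = idx1 then d - n - 1 - σ (Sum.inl idx2) else 0) (n / 2 + 1) with hτ
  set φ : ((Fin n ⊕ Unit) →₀ ℕ) → ((Fin n ⊕ Unit) →₀ ℕ) := fun σ =>
    if P σ then τ σ else σ with hφ
  have hne21 : idx2 ≠ idx1 := by simp [hidx2, hidx1, Fin.ext_iff]; omega
  -- for bad σ ∈ A, σ(idx2) ≥ 1 and σ(idx1) = d - σ(idx2)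
  have hbadfacts : ∀ σ ∈ A, P σ →
      1 ≤ σ (Sum.inl idx2) ∧ σ (Sum.inl idx1) = d - σ (Sum.inl idx2) := by
    intro σ hσ hPσ
    have hsum : (∑ j : Fin n, σ (Sum.inl j)) =
        σ (Sum.inl idx2) + σ (Sum.inl idx1) :=
      sum_two hn _ (fun j hj => hPσ.2.1 j hj)
    have hdeg := hσ.1
    rw [degw, hsum, hPσ.1] at hdeg
    have h1 := (hAbound σ hσ).1 idx1
    omega
  -- membership of τ σ pointwise
  have hτ_inr : ∀ σ, τ σ (Sum.inr ()) = n / 2 + 1 := fun σ => toE_apply_inr _ _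
  have hτ_idx2 : ∀ σ, τ σ (Sum.inl idx2) = σ (Sum.inl idx2) - 1 := by
    intro σ; rw [hτ]; rw [toE_apply_inl]; simp
  -- generators of the ideal
  set S : Set (MvPolynomial (Fin n ⊕ Unit) k) :=
    ({(X (Sum.inr ()) : MvPolynomial (Fin n ⊕ Unit) k) ^ d} ∪
      Set.range fun j : Fin n =>
        (X (Sum.inl j) : MvPolynomial (Fin n ⊕ Unit) k) ^ d) with hS
  have hyMem : (X (Sum.inr ()) : MvPolynomial (Fin n ⊕ Unit) k) ^ d ∈ Ideal.span S :=
    Ideal.subset_span (Or.inl rfl)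
  have hxMem : ∀ j : Fin n,
      (X (Sum.inl j) : MvPolynomial (Fin n ⊕ Unit) k) ^ d ∈ Ideal.span S :=
    fun j => Ideal.subset_span (Or.inr ⟨j, rfl⟩)
  -- divisibility criterion for ideal membership
  have hmemI : ∀ (σ : (Fin n ⊕ Unit) →₀ ℕ) (v : Fin n ⊕ Unit),
      d ≤ σ v + M1 v →
      monomial σ (1 : k) *
          ((∏ j : Fin n, X (Sum.inl j) ^
              (if (j : ℕ) < n - 2 then d - 1 else if (j : ℕ) = n - 2 then n else 0)) *
            X (Sum.inr ()) ^ (d - 1)) ∈ Ideal.span S := by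
    intro σ v hv
    rw [prod_eq_monomial, ← hM1, monomial_mul, mul_one]
    have hdvd : (X v : MvPolynomial (Fin n ⊕ Unit) k) ^ d ∣ monomial (σ + M1) 1 := by
      rw [X_pow_eq_monomial, monomial_dvd_monomial]
      refine ⟨Or.inr ?_, dvd_refl 1⟩
      rw [Finsupp.le_def]
      intro i
      rcases eq_or_ne i v with rfl | hne
      · rw [Finsupp.single_apply, if_pos rfl, Finsupp.add_apply]; exact hv
      · rw [Finsupp.single_apply, if_neg (fun h => hne h.symm)]; exact Nat.zero_le _
    obtain ⟨c, hc⟩ := hdvd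
    rw [hc]
    cases v with
    | inl j => exact Ideal.mul_mem_right c _ (hxMem j)
    | inr u => cases u; exact Ideal.mul_mem_right c _ hyMem
  have hM1inr : M1 (Sum.inr ()) = d - 1 := by rw [hM1, toE_apply_inr]
  have hM1inl : ∀ j : Fin n, M1 (Sum.inl j) =
      if (j : ℕ) < n - 2 then d - 1 else if (j : ℕ) = n - 2 then n else 0 := by
    intro j; rw [hM1, toE_apply_inl]
  -- non-pure-power criterion
  have hnotpow : ∀ σ : (Fin n ⊕ Unit) →₀ ℕ,
      (∀ j : Fin n, σ (Sum.inl j) ≠ d ∨ σ (Sum.inr ()) ≠ 0) →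
      (∀ j : Fin n,
        monomial σ (1 : k) ≠ (X (Sum.inl j) : MvPolynomial (Fin n ⊕ Unit) k) ^ d) := by
    intro σ hσ j heq
    rw [X_pow_eq_monomial, monomial_eq_monomial_iff] at heq
    rcases heq with ⟨h1, _⟩ | ⟨h1, _⟩
    · rcases hσ j with h | h
      · exact h (by rw [h1, Finsupp.single_apply, if_pos rfl])
      · exact h (by rw [h1, Finsupp.single_apply, if_neg (by simp)])
    · exact one_ne_zero h1
  -- B is finite
  have hBfin : B.Finite := by
    apply Set.Finite.subset (Set.finite_Icc (0 : (Fin n ⊕ Unit) →₀ ℕ) (toE n (fun _ => d) d))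
    intro σ hσ
    have hdeg := hσ.1
    rw [degw] at hdeg
    refine ⟨zero_le, ?_⟩
    rw [Finsupp.le_def]
    intro i
    cases i with
    | inl j =>
      rw [toE_apply_inl]
      have : σ (Sum.inl j) ≤ ∑ i : Fin n, σ (Sum.inl i) :=
        Finset.single_le_sum (f := fun i => σ (Sum.inl i)) (fun _ _ => Nat.zero_le _)
          (Finset.mem_univ j)
      omega
    | inr u =>
      cases u
      show σ (Sum.inr ()) ≤ toE n (fun _ => d) d (Sum.inr ())
      rw [toE_apply_inr]
      omega
  -- the injection
  apply Set.ncard_le_ncard_of_injOn φ _ _ hBfin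
  · -- maps A into B
    intro σ hσ
    obtain ⟨hxb, hyb⟩ := hAbound σ hσ
    by_cases hPσ : P σ
    · -- bad case: φ σ = τ σ
      have hφσ : φ σ = τ σ := if_pos hPσ
      obtain ⟨ha1, _⟩ := hbadfacts σ hσ hPσ
      set a := σ (Sum.inl idx2) with hadef
      have haub : a + n < d := hPσ.2.2
      rw [hφσ]
      refine ⟨?_, ?_, ?_⟩
      · -- degree
        rw [hτ, degw_toE]
        rw [sum_two hn _ (fun j hj => ?_)]
        · have e2 : (if (⟨n - 2, by omega⟩ : Fin n) = idx2 then a - 1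
              else if (⟨n - 2, by omega⟩ : Fin n) = idx1 then d - n - 1 - a else 0) = a - 1 := by
            rw [if_pos rfl]
          have e1 : (if (⟨n - 1, by omega⟩ : Fin n) = idx2 then a - 1
              else if (⟨n - 1, by omega⟩ : Fin n) = idx1 then d - n - 1 - a else 0) =
              d - n - 1 - a := by
            rw [if_neg (fun h => hne21 h.symm), if_pos rfl]
          rw [e2, e1]
          omega
        · have hj2 : j ≠ idx2 := by simp [hidx2, Fin.ext_iff]; omega
          have hj1 : j ≠ idx1 := by simp [hidx1, Fin.ext_iff]; omega
          rw [if_neg hj2, if_neg hj1]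
      · -- not a pure power
        apply hnotpow
        intro j
        right
        rw [hτ_inr]
        omega
      · -- ideal membership via y^d
        apply hmemI (τ σ) (Sum.inr ())
        rw [hτ_inr, hM1inr]
        omega
    · -- good case: φ σ = σ
      have hφσ : φ σ = σ := if_neg hPσ
      rw [hφσ]
      refine ⟨hσ.1, ?_, ?_⟩
      · apply hnotpow
        intro j
        left
        have := hxb j
        omega
      · simp only [hP] at hPσ
        by_cases hy : σ (Sum.inr ()) = 0
        · by_cases hb : ∀ j : Fin n, (j : ℕ) < n - 2 → σ (Sum.inl j) = 0
          · -- x_{n-2} large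
            have hd2 : ¬ (σ (Sum.inl idx2) + n < d) := fun hc => hPσ ⟨hy, hb, hc⟩
            apply hmemI σ (Sum.inl idx2)
            rw [hM1inl]
            have : ¬ ((idx2 : ℕ) < n - 2) := by simp [hidx2]
            rw [if_neg this, if_pos (by simp [hidx2])]
            omega
          · -- some x_j with j < n-2 nonzero
            push_neg at hb
            obtain ⟨j, hj, hjne⟩ := hb
            apply hmemI σ (Sum.inl j)
            rw [hM1inl, if_pos hj]
            omega
        · apply hmemI σ (Sum.inr ())
          rw [hM1inr]
          omega
  · -- injectivity on A
    intro σ hσ σ' hσ' heq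
    have hyb := (hAbound σ hσ).2
    have hyb' := (hAbound σ' hσ').2
    by_cases hPσ : P σ <;> by_cases hPσ' : P σ'
    · -- both bad
      have h1 : τ σ = τ σ' := by
        have h0 := heq
        simp only [hφ] at h0
        rwa [if_pos hPσ, if_pos hPσ'] at h0
      obtain ⟨ha1, hv1⟩ := hbadfacts σ hσ hPσ
      obtain ⟨ha1', hv1'⟩ := hbadfacts σ' hσ' hPσ'
      have haa : σ (Sum.inl idx2) = σ' (Sum.inl idx2) := by
        have h2 := DFunLike.congr_fun h1 (Sum.inl idx2)
        rw [hτ_idx2, hτ_idx2] at h2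
        omega
      ext i
      cases i with
      | inl j =>
        rcases lt_trichotomy ((j : ℕ)) (n - 2) with hj | hj | hj
        · rw [hPσ.2.1 j hj, hPσ'.2.1 j hj]
        · have : j = idx2 := by simp [hidx2, Fin.ext_iff]; omega
          rw [this, haa]
        · have hjn : (j : ℕ) = n - 1 := by have := j.isLt; omega
          have : j = idx1 := by simp [hidx1, Fin.ext_iff]; omega
          rw [this, hv1, hv1', haa]
      | inr u =>
        cases u
        show σ (Sum.inr ()) = σ' (Sum.inr ())
        rw [hPσ.1, hPσ'.1]
    · -- bad / good: impossible
      exfalso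
      have h1 : τ σ = σ' := by
        have h0 := heq; simp only [hφ] at h0
        rwa [if_pos hPσ, if_neg hPσ'] at h0
      have h2 := DFunLike.congr_fun h1 (Sum.inr ())
      rw [hτ_inr] at h2
      omega
    · exfalso
      have h1 : σ = τ σ' := by
        have h0 := heq; simp only [hφ] at h0
        rwa [if_neg hPσ, if_pos hPσ'] at h0
      have h2 := DFunLike.congr_fun h1 (Sum.inr ())
      rw [hτ_inr] at h2
      omega
    · have h0 := heq
      simp only [hφ] at h0
      rwa [if_neg hPσ, if_neg hPσ'] at h0
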